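/- Let a, b ≥ 2 and u = 1^a 2^b. For any letters m < s and any word v over positive integers, if v has no u-match, then none of the words m s m s v, s^{a+1} m s m s v, and s^{a+1} m s v (all letters taken from {m, s}) has a u-match; equivalently, no u-match in these words begins before the suffix v. -/

import Mathlib

/-- `red w` replaces each occurrence of the `i`-th smallest letter of `w` by `i`. -/
def red (w : List ℕ) : List ℕ :=
  w.map (fun x => (w.toFinset.filter (· < x)).card + 1)

/-- `w` has a `u`-match (starting at some position `i`): a factor of `w` of length `|u|`
whose reduction equals `red u` (which is `u` itself when `red u = u`). -/
def HasMatch (u w : List ℕ) : Prop :=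
  ∃ i, i + u.length ≤ w.length ∧ red ((w.drop i).take u.length) = red u

/-- The word `w` `u`-represents the labeled graph with vertex set `V` and adjacency `E`:
the letters occurring in `w` are exactly `V`, and two distinct vertices are adjacent
iff `w` restricted to these two letters has no `u`-match. -/
def Represents (u w : List ℕ) (V : Finset ℕ) (E : ℕ → ℕ → Prop) : Prop :=
  (∀ x, x ∈ w ↔ x ∈ V) ∧
  ∀ x ∈ V, ∀ y ∈ V, x ≠ y →
    (E x y ↔ ¬ HasMatch u (w.filter (fun z => z = x ∨ z = y)))

lemma red_u {a b : ℕ} (ha : 1 ≤ a) (hb : 1 ≤ b) :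
    red (List.replicate a 1 ++ List.replicate b 2) = List.replicate a 1 ++ List.replicate b 2 := by
  have htf : (List.replicate a 1 ++ List.replicate b 2).toFinset = {1, 2} := by
    rw [List.toFinset_append, List.toFinset_replicate_of_ne_zero (by omega),
      List.toFinset_replicate_of_ne_zero (by omega)]
    rfl
  have h1 : ((({1, 2} : Finset ℕ)).filter (· < 1)).card + 1 = 1 := by decide
  have h2 : ((({1, 2} : Finset ℕ)).filter (· < 2)).card + 1 = 2 := by decide
  simp only [red, htf, List.map_append, List.map_replicate, h1, h2]

lemma head_of_red {a b m s : ℕ} (ha : 2 ≤ a) (hb : 1 ≤ b) (hms : m < s) (t : List ℕ)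
    (ht : ∀ x ∈ t, x = m ∨ x = s)
    (hred : red t = red (List.replicate a 1 ++ List.replicate b 2)) :
    t[0]? = some m ∧ t[1]? = some m := by
  rw [red_u (by omega) hb] at hred
  set f : ℕ → ℕ := fun x => ((t.toFinset.filter (· < x)).card + 1) with hf
  have hmap : t.map f = List.replicate a 1 ++ List.replicate b 2 := hred
  have hfm : f m = 1 := by
    have hemp : t.toFinset.filter (· < m) = ∅ := by
      ext x
      simp only [Finset.mem_filter, List.mem_toFinset, Finset.notMem_empty, iff_false, not_and]
      intro hx hlt
      rcases ht x hx with rfl | rfl <;> omega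
    simp [hf, hemp]
  have h2 : ∃ x ∈ t, f x = 2 := by
    have h2' : (2 : ℕ) ∈ t.map f := by
      rw [hmap, List.mem_append]
      right
      rw [List.mem_replicate]
      omega
    simpa using h2'
  obtain ⟨x, hx, hfx⟩ := h2
  have hfs : f s = 2 := by
    rcases ht x hx with rfl | rfl
    · omega
    · exact hfx
  have key : ∀ j, j < a → t[j]? = some m := by
    intro j hj
    have h1 : (t.map f)[j]? = some 1 := by
      rw [hmap, List.getElem?_append_left (by simpa using hj), List.getElem?_replicate, if_pos hj]
    rw [List.getElem?_map] at h1
    obtain ⟨y, hy, hfy⟩ := Option.map_eq_some_iff.mp h1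
    obtain ⟨hlt, hget⟩ := List.getElem?_eq_some_iff.mp hy
    have hmem : y ∈ t := hget ▸ List.getElem_mem hlt
    rcases ht y hmem with rfl | rfl
    · exact hy
    · omega
  exact ⟨key 0 (by omega), key 1 (by omega)⟩

lemma no_match_prefix {a b m s : ℕ} (ha : 2 ≤ a) (hb : 1 ≤ b) (hms : m < s)
    (p v : List ℕ)
    (hp : ∀ x ∈ p, x = m ∨ x = s)
    (hv : ∀ x ∈ v, x = m ∨ x = s)
    (hnv : ¬ HasMatch (List.replicate a 1 ++ List.replicate b 2) v)
    (hpre : ∀ i < p.length, ¬ ((p ++ v)[i]? = some m ∧ (p ++ v)[i + 1]? = some m)) :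
    ¬ HasMatch (List.replicate a 1 ++ List.replicate b 2) (p ++ v) := by
  rintro ⟨i, hil, hir⟩
  have hL : (List.replicate a 1 ++ List.replicate b 2).length = a + b := by simp
  rcases Nat.lt_or_ge i p.length with hi | hi
  · -- match starts inside the prefix: contradiction with hpre
    set t := (((p ++ v).drop i).take (List.replicate a 1 ++ List.replicate b 2).length) with htdef
    have ht : ∀ x ∈ t, x = m ∨ x = s := by
      intro x hxt
      have : x ∈ p ++ v := List.mem_of_mem_drop (List.mem_of_mem_take hxt)
      rcases List.mem_append.mp this with h | h
      · exact hp x h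
      · exact hv x h
    obtain ⟨h0, h1⟩ := head_of_red ha hb hms t ht hir
    refine hpre i hi ⟨?_, ?_⟩
    · have := h0
      rw [htdef, List.getElem?_take, if_pos (by omega), List.getElem?_drop] at this
      simpa using this
    · have := h1
      rw [htdef, List.getElem?_take, if_pos (by omega), List.getElem?_drop] at this
      simpa using this
  · -- match is entirely inside v
    apply hnv
    refine ⟨i - p.length, ?_, ?_⟩
    · have : (p ++ v).length = p.length + v.length := by simp
      omega
    · have hdrop : (p ++ v).drop i = v.drop (i - p.length) := by
        obtain ⟨j, rfl⟩ : ∃ j, i = p.length + j := ⟨i - p.length, by omega⟩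
        rw [List.drop_length_add_append]
        congr 1
        omega
      rw [← hdrop]
      exact hir

theorem key_lemma_1122 (a b m s : ℕ) (ha : 2 ≤ a) (hb : 2 ≤ b) (hms : m < s)
    (v : List ℕ) (hv : ∀ x ∈ v, x = m ∨ x = s)
    (hnv : ¬ HasMatch (List.replicate a 1 ++ List.replicate b 2) v) :
    ¬ HasMatch (List.replicate a 1 ++ List.replicate b 2) ([m, s, m, s] ++ v) ∧
    ¬ HasMatch (List.replicate a 1 ++ List.replicate b 2)
        (List.replicate (a + 1) s ++ [m, s, m, s] ++ v) ∧
    ¬ HasMatch (List.replicate a 1 ++ List.replicate b 2)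
        (List.replicate (a + 1) s ++ [m, s] ++ v) := by
  have hb1 : 1 ≤ b := by omega
  have hsrep : ∀ x ∈ List.replicate (a + 1) s, x = m ∨ x = s := by
    intro x hx
    right
    exact (List.eq_of_mem_replicate hx)
  refine ⟨?_, ?_, ?_⟩
  · apply no_match_prefix ha hb1 hms [m, s, m, s] v ?_ hv hnv
    · intro i hi ⟨h0, h1⟩
      simp only [List.length_cons, List.length_nil] at hi
      interval_cases i <;> simp_all
    · intro x hx
      simp only [List.mem_cons, List.not_mem_nil, or_false] at hx
      tauto
  · apply no_match_prefix ha hb1 hms (List.replicate (a + 1) s ++ [m, s, m, s]) v ?_ hv hnv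
    · intro i hi ⟨h0, h1⟩
      have hplen : (List.replicate (a + 1) s ++ [m, s, m, s]).length = a + 5 := by simp
      rw [hplen] at hi
      rw [List.append_assoc] at h0 h1
      rcases Nat.lt_or_ge i (a + 1) with hlt | hge
      · rw [List.getElem?_append_left (by simpa using hlt), List.getElem?_replicate,
          if_pos hlt] at h0
        simp only [Option.some.injEq] at h0
        omega
      · have hk : i = a + 1 ∨ i = a + 2 ∨ i = a + 3 ∨ i = a + 4 := by omega
        have hget : ∀ k, (List.replicate (a + 1) s ++ ([m, s, m, s] ++ v))[a + 1 + k]? =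
            ([m, s, m, s] ++ v)[k]? := by
          intro k
          rw [List.getElem?_append_right (by simp only [List.length_replicate]; omega)]
          congr 1
          simp
        rcases hk with rfl | rfl | rfl | rfl
        · have := h1
          rw [show a + 1 + 1 = a + 1 + 1 by rfl] at this
          rw [hget 1] at this
          simp at this; omega
        · have := h0
          rw [show a + 2 = a + 1 + 1 by omega, hget 1] at this
          simp at this; omega
        · have := h1
          rw [show a + 3 + 1 = a + 1 + 3 by omega, hget 3] at this
          simp at this; omega
        · have := h0
          rw [show a + 4 = a + 1 + 3 by omega, hget 3] at this
          simp at this; omega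
    · intro x hx
      rcases List.mem_append.mp hx with h | h
      · exact hsrep x h
      · simp only [List.mem_cons, List.not_mem_nil, or_false] at h
        tauto
  · apply no_match_prefix ha hb1 hms (List.replicate (a + 1) s ++ [m, s]) v ?_ hv hnv
    · intro i hi ⟨h0, h1⟩
      have hplen : (List.replicate (a + 1) s ++ [m, s]).length = a + 3 := by simp
      rw [hplen] at hi
      rw [List.append_assoc] at h0 h1
      rcases Nat.lt_or_ge i (a + 1) with hlt | hge
      · rw [List.getElem?_append_left (by simpa using hlt), List.getElem?_replicate,
          if_pos hlt] at h0
        simp only [Option.some.injEq] at h0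
        omega
      · have hget : ∀ k, (List.replicate (a + 1) s ++ ([m, s] ++ v))[a + 1 + k]? =
            ([m, s] ++ v)[k]? := by
          intro k
          rw [List.getElem?_append_right (by simp only [List.length_replicate]; omega)]
          congr 1
          simp
        have hk : i = a + 1 ∨ i = a + 2 := by omega
        rcases hk with rfl | rfl
        · have := h1
          rw [hget 1] at this
          simp at this; omega
        · have := h0
          rw [show a + 2 = a + 1 + 1 by omega, hget 1] at this
          simp at this; omega
    · intro x hx
      rcases List.mem_append.mp hx with h | h
      · exact hsrep x h
      · simp only [List.mem_cons, List.not_mem_nil, or_false] at h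
        tauto
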